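/- arXiv:2602.23884 — 3 statements merged into one kernel-verified Lean document; each statement's English description precedes it below -/
import Mathlib

section
/- Let G and H be finite simple graphs with G connected. If S is a distance-equalizer set of the corona product G⊙H, then: (i) L(S) is a vertex cover of the empty bisector graph Ĝ; (ii) U(S) is a vertex cover of Ĝ; and (iii) L(S) ∪ U(S) = V(G). -/
universe u v

variable {V : Type u} {W : Type v}

/-- A distance-equalizer set of a graph: for every pair of distinct vertices outside `S`
there is a vertex of `S` equidistant to both. -/
def IsDistEqSet {α : Type*} (G : SimpleGraph α) (S : Set α) : Prop :=
  ∀ ⦃x y : α⦄, x ∉ S → y ∉ S → x ≠ y → ∃ w ∈ S, G.dist w x = G.dist w y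

/-- The equidistant dimension of a graph: the minimum cardinality of a distance-equalizer set. -/
noncomputable def eqdim {α : Type*} (G : SimpleGraph α) : ℕ :=
  sInf {n | ∃ S : Set α, IsDistEqSet G S ∧ S.ncard = n}

/-- The bisector of two vertices: vertices equidistant to both. -/
def bisector {α : Type*} (G : SimpleGraph α) (x y : α) : Set α :=
  {w | G.dist w x = G.dist w y}

/-- The empty bisector graph of `G`: two distinct vertices are adjacent iff their bisector
in `G` is empty. -/
def emptyBisector {α : Type*} (G : SimpleGraph α) : SimpleGraph α where
  Adj x y := x ≠ y ∧ bisector G x y = ∅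
  symm := ⟨by
    rintro x y ⟨h1, h2⟩
    refine ⟨h1.symm, Set.eq_empty_iff_forall_notMem.mpr fun w hw => ?_⟩
    exact Set.eq_empty_iff_forall_notMem.mp h2 w
      ((show G.dist w y = G.dist w x from hw).symm)⟩
  loopless := ⟨fun _ h => h.1 rfl⟩

/-- A vertex cover of a graph: a set of vertices meeting every edge. -/
def IsVertexCover {α : Type*} (G : SimpleGraph α) (C : Set α) : Prop :=
  ∀ ⦃x y : α⦄, G.Adj x y → x ∈ C ∨ y ∈ C

/-- An independent set of a graph: a set of pairwise non-adjacent vertices. -/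
def IsIndepSet {α : Type*} (G : SimpleGraph α) (A : Set α) : Prop :=
  ∀ ⦃x y : α⦄, x ∈ A → y ∈ A → ¬ G.Adj x y

/-- The vertex cover number `β(G)`. -/
noncomputable def vcNum {α : Type*} (G : SimpleGraph α) : ℕ :=
  sInf {n | ∃ C : Set α, IsVertexCover G C ∧ C.ncard = n}

/-- The independence number `α(G)`. -/
noncomputable def indepNum {α : Type*} (G : SimpleGraph α) : ℕ :=
  sSup {n | ∃ A : Set α, IsIndepSet G A ∧ A.ncard = n}

/-- A forward-equalized pair `(X, Y)` of `G`: `X ∪ Y = V(G)` and for every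
`a ∈ X \ Y` and `b ∈ Y \ X` there is `w` with `d(w,a) = d(w,b) + 1`. -/
def IsForwardEqualizedPair {α : Type*} (G : SimpleGraph α) (X Y : Set α) : Prop :=
  X ∪ Y = Set.univ ∧
  ∀ ⦃a⦄, a ∈ X \ Y → ∀ ⦃b⦄, b ∈ Y \ X → ∃ w, G.dist w a = G.dist w b + 1

/-- `β*(G)`: the minimum of `|X ∩ Y|` over all pairs of vertex covers `X, Y` of the
empty bisector graph of `G` such that `(X, Y)` is a forward-equalized pair of `G`. -/
noncomputable def betaStar {α : Type*} (G : SimpleGraph α) : ℕ :=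
  sInf {n | ∃ X Y : Set α,
    IsVertexCover (emptyBisector G) X ∧ IsVertexCover (emptyBisector G) Y ∧
    IsForwardEqualizedPair G X Y ∧ (X ∩ Y).ncard = n}

/-- The corona product `G ⊙ H`: one copy of `H` for each vertex `i` of `G` (the vertices
`Sum.inr (i, w)`), with `i` joined to every vertex of its copy. -/
def corona (G : SimpleGraph V) (H : SimpleGraph W) : SimpleGraph (V ⊕ V × W) where
  Adj x y :=
    match x, y with
    | Sum.inl a, Sum.inl b => G.Adj a b
    | Sum.inl a, Sum.inr p => a = p.1
    | Sum.inr p, Sum.inl a => a = p.1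
    | Sum.inr p, Sum.inr q => p.1 = q.1 ∧ H.Adj p.2 q.2
  symm := ⟨by
    rintro (a | p) (b | q) h
    · exact h.symm
    · exact h
    · exact h
    · exact ⟨h.1.symm, h.2.symm⟩⟩
  loopless := ⟨by
    rintro (a | p) h
    · exact G.irrefl h
    · exact H.irrefl h.2⟩
section CoronaAux

open SimpleGraph

/-- Base projection of a corona vertex. -/
def coronaBase : V ⊕ V × W → V := Sum.elim id Prod.fst

lemma corona_adj_base {G : SimpleGraph V} {H : SimpleGraph W} {x y : V ⊕ V × W}
    (e : (corona G H).Adj x y) :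
    coronaBase x = coronaBase y ∨ G.Adj (coronaBase x) (coronaBase y) := by
  rcases x with a | p <;> rcases y with b | q
  · exact Or.inr e
  · exact Or.inl e
  · exact Or.inl (Eq.symm (e : b = p.1))
  · exact Or.inl e.1

lemma corona_walk_dist_le {G : SimpleGraph V} {H : SimpleGraph W} (hG : G.Connected)
    {x y : V ⊕ V × W} (p : (corona G H).Walk x y) :
    G.dist (coronaBase x) (coronaBase y) ≤ p.length := by
  induction p with
  | nil => simp
  | @cons u z y e p ih =>
    rcases corona_adj_base e with h | h
    · rw [h]
      exact ih.trans (by simp)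
    · have h1 : G.dist (coronaBase u) (coronaBase z) ≤ 1 := by
        have := G.dist_le (SimpleGraph.Walk.cons h SimpleGraph.Walk.nil)
        simpa using this
      have h2 := hG.dist_triangle (u := coronaBase u) (v := coronaBase z) (w := coronaBase y)
      simp only [SimpleGraph.Walk.length_cons]
      omega

lemma corona_walk_inl_inr {G : SimpleGraph V} {H : SimpleGraph W} (hG : G.Connected)
    {x y : V ⊕ V × W} (p : (corona G H).Walk x y) :
    ∀ a v w, x = Sum.inl a → y = Sum.inr (v, w) → G.dist a v + 1 ≤ p.length := by
  induction p with
  | nil => rintro a v w rfl h; exact absurd h (by simp)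
  | @cons u z y e p ih =>
    rintro a v w rfl rfl
    rcases z with b | q
    · have h1 := ih b v w rfl rfl
      have h2 : G.dist a b ≤ 1 := by
        have := G.dist_le (SimpleGraph.Walk.cons (e : G.Adj a b) SimpleGraph.Walk.nil)
        exact this
      have h3 := hG.dist_triangle (u := a) (v := b) (w := v)
      simp only [SimpleGraph.Walk.length_cons]
      omega
    · have h1 := corona_walk_dist_le hG p
      have h2 : (a : V) = q.1 := e
      have h3 : G.dist q.1 v ≤ p.length := h1
      simp only [SimpleGraph.Walk.length_cons]
      rw [h2]
      omega

lemma corona_walk_inr_inr {G : SimpleGraph V} {H : SimpleGraph W} (hG : G.Connected)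
    {x y : V ⊕ V × W} (p : (corona G H).Walk x y) :
    ∀ b w' v w, b ≠ v → x = Sum.inr (b, w') → y = Sum.inr (v, w) →
      G.dist b v + 2 ≤ p.length := by
  induction p with
  | nil =>
    rintro b w' v w hbv rfl h
    exact absurd (congrArg (Sum.elim id Prod.fst) h) (by simpa using hbv)
  | @cons u z y e p ih =>
    rintro b w' v w hbv rfl rfl
    rcases z with c | q
    · have h2 : (c : V) = b := e
      subst h2
      have h1 := corona_walk_inl_inr hG p c v w rfl rfl
      simp only [SimpleGraph.Walk.length_cons]
      omega
    · have h2 : (b : V) = q.1 := e.1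
      have h1 := ih q.1 q.2 v w (h2 ▸ hbv) rfl rfl
      simp only [SimpleGraph.Walk.length_cons]
      rw [h2]
      omega

/-- The embedding of `G` into the corona as a graph homomorphism. -/
def coronaInlHom (G : SimpleGraph V) (H : SimpleGraph W) : G →g corona G H :=
  ⟨Sum.inl, fun h => h⟩

lemma corona_dist_inl_inl {G : SimpleGraph V} {H : SimpleGraph W} (hG : G.Connected)
    (a b : V) : (corona G H).dist (Sum.inl a) (Sum.inl b) = G.dist a b := by
  obtain ⟨p, hp⟩ := (hG.preconnected a b).exists_walk_length_eq_dist
  have hle : (corona G H).dist (Sum.inl a) (Sum.inl b) ≤ G.dist a b := by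
    have := (corona G H).dist_le (p.map (coronaInlHom G H))
    rwa [SimpleGraph.Walk.length_map, hp] at this
  have hreach : (corona G H).Reachable (Sum.inl a) (Sum.inl b) :=
    ⟨p.map (coronaInlHom G H)⟩
  obtain ⟨q, hq⟩ := hreach.exists_walk_length_eq_dist
  have hge : G.dist a b ≤ q.length := corona_walk_dist_le hG q
  omega

lemma corona_dist_inl_inr {G : SimpleGraph V} {H : SimpleGraph W} (hG : G.Connected)
    (a v : V) (w : W) :
    (corona G H).dist (Sum.inl a) (Sum.inr (v, w)) = G.dist a v + 1 := by
  obtain ⟨p, hp⟩ := (hG.preconnected a v).exists_walk_length_eq_dist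
  have e : (corona G H).Adj (Sum.inl v) (Sum.inr (v, w)) := rfl
  have hle : (corona G H).dist (Sum.inl a) (Sum.inr (v, w)) ≤ G.dist a v + 1 := by
    have := (corona G H).dist_le ((p.map (coronaInlHom G H)).concat e)
    have hl : ((p.map (coronaInlHom G H)).concat e).length = G.dist a v + 1 := by
      have h2 := SimpleGraph.Walk.length_concat (p.map (coronaInlHom G H)) e
      have h3 := SimpleGraph.Walk.length_map (coronaInlHom G H) p
      omega
    exact this.trans hl.le
  have hreach : (corona G H).Reachable (Sum.inl a) (Sum.inr (v, w)) :=
    ⟨(p.map (coronaInlHom G H)).concat e⟩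
  obtain ⟨q, hq⟩ := hreach.exists_walk_length_eq_dist
  have hge := corona_walk_inl_inr hG q a v w rfl rfl
  omega

lemma corona_dist_inr_inl {G : SimpleGraph V} {H : SimpleGraph W} (hG : G.Connected)
    (b : V) (w' : W) (v : V) :
    (corona G H).dist (Sum.inr (b, w')) (Sum.inl v) = G.dist b v + 1 := by
  rw [SimpleGraph.dist_comm, corona_dist_inl_inr hG, SimpleGraph.dist_comm]

lemma corona_dist_inr_inr {G : SimpleGraph V} {H : SimpleGraph W} (hG : G.Connected)
    (b : V) (w' : W) (v : V) (w : W) (hbv : b ≠ v) :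
    (corona G H).dist (Sum.inr (b, w')) (Sum.inr (v, w)) = G.dist b v + 2 := by
  obtain ⟨p, hp⟩ := (hG.preconnected b v).exists_walk_length_eq_dist
  have e1 : (corona G H).Adj (Sum.inr (b, w')) (Sum.inl b) := rfl
  have e2 : (corona G H).Adj (Sum.inl v) (Sum.inr (v, w)) := rfl
  have hle : (corona G H).dist (Sum.inr (b, w')) (Sum.inr (v, w)) ≤ G.dist b v + 2 := by
    have := (corona G H).dist_le
      (SimpleGraph.Walk.cons e1 ((p.map (coronaInlHom G H)).concat e2))
    have hl : (SimpleGraph.Walk.cons e1 ((p.map (coronaInlHom G H)).concat e2)).length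
        = G.dist b v + 2 := by
      have h1 := SimpleGraph.Walk.length_cons e1 ((p.map (coronaInlHom G H)).concat e2)
      have h2 := SimpleGraph.Walk.length_concat (p.map (coronaInlHom G H)) e2
      have h3 := SimpleGraph.Walk.length_map (coronaInlHom G H) p
      exact h1.trans (congrArg (· + 1) (h2.trans (congrArg (· + 1) (h3.trans hp))))
    exact this.trans hl.le
  have hreach : (corona G H).Reachable (Sum.inr (b, w')) (Sum.inr (v, w)) :=
    ⟨SimpleGraph.Walk.cons e1 ((p.map (coronaInlHom G H)).concat e2)⟩
  obtain ⟨q, hq⟩ := hreach.exists_walk_length_eq_dist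
  have hge := corona_walk_inr_inr hG q b w' v w hbv rfl rfl
  omega

end CoronaAux

/-- If `S` is a distance-equalizer set of `G ⊙ H`, then
`L(S) = {v | inl v ∈ S}` and `U(S) = {v | V(H_v) ∩ S ≠ ∅}` are vertex covers of the
empty bisector graph `Ĝ`, and `L(S) ∪ U(S) = V(G)`. -/
theorem corona_distEqSet_LU [Fintype V] [Fintype W] [Nonempty W]
    (G : SimpleGraph V) (H : SimpleGraph W) (hG : G.Connected)
    (S : Set (V ⊕ V × W)) (hS : IsDistEqSet (corona G H) S) :
    IsVertexCover (emptyBisector G) {v : V | Sum.inl v ∈ S} ∧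
    IsVertexCover (emptyBisector G) {v : V | ∃ w : W, Sum.inr (v, w) ∈ S} ∧
    {v : V | Sum.inl v ∈ S} ∪ {v : V | ∃ w : W, Sum.inr (v, w) ∈ S} = Set.univ := by
  refine ⟨?_, ?_, ?_⟩
  · -- L(S) is a vertex cover of the empty bisector graph
    intro u v huv
    by_contra hc
    push_neg at hc
    obtain ⟨hu, hv⟩ := hc
    obtain ⟨s, hsS, hd⟩ := hS hu hv (by simpa using (show u ≠ v ∧ bisector G u v = ∅ from huv).1)
    have hbis : coronaBase s ∈ bisector G u v := by
      rcases s with a | ⟨b, w2⟩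
      · rw [corona_dist_inl_inl hG, corona_dist_inl_inl hG] at hd
        exact hd
      · rw [corona_dist_inr_inl hG, corona_dist_inr_inl hG] at hd
        exact Nat.add_right_cancel hd
    rw [(show u ≠ v ∧ bisector G u v = ∅ from huv).2] at hbis
    exact hbis
  · -- U(S) is a vertex cover of the empty bisector graph
    intro u v huv
    by_contra hc
    push_neg at hc
    obtain ⟨hu, hv⟩ := hc
    have w0 : W := Classical.arbitrary W
    have hxu : Sum.inr (u, w0) ∉ S := fun h => hu ⟨w0, h⟩
    have hxv : Sum.inr (v, w0) ∉ S := fun h => hv ⟨w0, h⟩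
    obtain ⟨s, hsS, hd⟩ := hS hxu hxv (by simp [(show u ≠ v ∧ bisector G u v = ∅ from huv).1])
    have hbis : coronaBase s ∈ bisector G u v := by
      rcases s with a | ⟨b, w2⟩
      · rw [corona_dist_inl_inr hG, corona_dist_inl_inr hG] at hd
        exact Nat.add_right_cancel hd
      · have hbu : b ≠ u := fun h => hu ⟨w2, h ▸ hsS⟩
        have hbv : b ≠ v := fun h => hv ⟨w2, h ▸ hsS⟩
        rw [corona_dist_inr_inr hG b w2 u w0 hbu,
          corona_dist_inr_inr hG b w2 v w0 hbv] at hd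
        exact Nat.add_right_cancel hd
    rw [(show u ≠ v ∧ bisector G u v = ∅ from huv).2] at hbis
    exact hbis
  · -- L(S) ∪ U(S) = V(G)
    ext v
    simp only [Set.mem_union, Set.mem_setOf_eq, Set.mem_univ, iff_true]
    by_contra hc
    push_neg at hc
    obtain ⟨h1, h2⟩ := hc
    have w0 : W := Classical.arbitrary W
    have hy : Sum.inr (v, w0) ∉ S := fun h => h2 w0 h
    obtain ⟨s, hsS, hd⟩ := hS h1 hy (by simp)
    rcases s with a | ⟨b, w2⟩
    · rw [corona_dist_inl_inl hG, corona_dist_inl_inr hG] at hd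
      omega
    · have hbv : b ≠ v := fun h => h2 w2 (h ▸ hsS)
      rw [corona_dist_inr_inl hG, corona_dist_inr_inr hG b w2 v w0 hbv] at hd
      omega
end

section
/- If G is a finite simple connected bipartite graph with partite sets A and B, then its empty bisector graph Ĝ is the complete bipartite graph with partite sets A and B; that is, two distinct vertices u, v are adjacent in Ĝ if and only if one of them lies in A and the other in B. -/
universe u v

variable {V : Type u} {W : Type v}

section Aux

variable {α : Type*} {G : SimpleGraph α} {A B : Set α}

lemma side_of_adj (hUnion : A ∪ B = Set.univ) (hDisj : Disjoint A B)
    (hA : IsIndepSet G A) (hB : IsIndepSet G B) {a b : α} (h : G.Adj a b) :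
    (a ∈ A ↔ b ∉ A) := by
  have mem : ∀ x : α, x ∈ A ∨ x ∈ B := by
    intro x
    have : x ∈ A ∪ B := hUnion ▸ Set.mem_univ x
    exact this
  constructor
  · intro ha hb
    exact hA ha hb h
  · intro hb
    rcases mem a with ha | ha
    · exact ha
    · rcases mem b with hb' | hb'
      · exact absurd hb' hb
      · exact absurd h (hB ha hb')

lemma walk_parity (hUnion : A ∪ B = Set.univ) (hDisj : Disjoint A B)
    (hA : IsIndepSet G A) (hB : IsIndepSet G B) :
    ∀ {u v : α} (p : G.Walk u v), ((u ∈ A) ↔ (v ∈ A)) ↔ Even p.length := by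
  intro u v p
  induction p with
  | nil => simp
  | cons h q ih =>
    have hside := side_of_adj hUnion hDisj hA hB h
    simp only [SimpleGraph.Walk.length_cons, Nat.even_add_one, ← ih]
    tauto

lemma dist_parity (hG : G.Connected) (hUnion : A ∪ B = Set.univ) (hDisj : Disjoint A B)
    (hA : IsIndepSet G A) (hB : IsIndepSet G B) (u v : α) :
    ((u ∈ A) ↔ (v ∈ A)) ↔ Even (G.dist u v) := by
  obtain ⟨p, hp⟩ := hG.exists_walk_length_eq_dist u v
  rw [← hp]
  exact walk_parity hUnion hDisj hA hB p

lemma dist_getVert_le (hG : G.Connected) {u v : α} (p : G.Walk u v) :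
    ∀ k : ℕ, G.dist u (p.getVert k) ≤ k := by
  intro k
  induction k with
  | zero => simp [p.getVert_zero]
  | succ k ih =>
    by_cases hk : k < p.length
    · have hadj := p.adj_getVert_succ hk
      calc G.dist u (p.getVert (k + 1))
          ≤ G.dist u (p.getVert k) + G.dist (p.getVert k) (p.getVert (k + 1)) :=
            hG.dist_triangle
        _ ≤ k + 1 := by
            have h1 : G.dist (p.getVert k) (p.getVert (k + 1)) ≤ 1 := by
              simpa using SimpleGraph.dist_le hadj.toWalk
            omega
    · rw [p.getVert_of_length_le (by omega), ← p.getVert_of_length_le (le_of_not_gt hk)]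
      omega

end Aux

/-- If `G` is connected and bipartite with partite sets `A`, `B`, then its
empty bisector graph is the complete bipartite graph with partite sets `A` and `B`. -/
theorem emptyBisector_of_bipartite [Fintype V]
    (G : SimpleGraph V) (hG : G.Connected)
    (A B : Set V) (hUnion : A ∪ B = Set.univ) (hDisj : Disjoint A B)
    (hA : IsIndepSet G A) (hB : IsIndepSet G B) :
    ∀ x y : V, x ≠ y →
      ((emptyBisector G).Adj x y ↔ ((x ∈ A ∧ y ∈ B) ∨ (x ∈ B ∧ y ∈ A))) := by
  intro x y hxy
  have mem : ∀ z : V, z ∈ A ∨ z ∈ B := fun z => (hUnion ▸ Set.mem_univ z : z ∈ A ∪ B)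
  have notB : ∀ z : V, z ∈ A → z ∉ B := fun z hz hz' =>
    Set.disjoint_left.mp hDisj hz hz'
  have notA : ∀ z : V, z ∈ B → z ∉ A := fun z hz hz' =>
    Set.disjoint_left.mp hDisj hz' hz
  constructor
  · rintro ⟨-, hbis⟩
    -- if x, y were on the same side, the midpoint of a shortest path would be in the bisector
    by_contra hside
    have hsame : x ∈ A ↔ y ∈ A := by
      rcases mem x with hx | hx <;> rcases mem y with hy | hy
      · tauto
      · exact absurd (Or.inl ⟨hx, hy⟩) hside
      · exact absurd (Or.inr ⟨hx, hy⟩) hside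
      · exact ⟨fun h => (notA x hx h).elim, fun h => (notA y hy h).elim⟩
    have heven : Even (G.dist x y) := (dist_parity hG hUnion hDisj hA hB x y).mp hsame
    obtain ⟨m, hm⟩ := heven
    obtain ⟨p, hp⟩ := hG.exists_walk_length_eq_dist x y
    set w := p.getVert m with hw
    have h1 : G.dist x w ≤ m := dist_getVert_le hG p m
    have h2 : G.dist y w ≤ m := by
      have : p.reverse.getVert m = w := by
        rw [SimpleGraph.Walk.getVert_reverse, hp]
        congr 1
        omega
      simpa [this] using dist_getVert_le hG p.reverse m
    have h3 : G.dist x y ≤ G.dist x w + G.dist w y := hG.dist_triangle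
    have hc1 : G.dist x w = G.dist w x := SimpleGraph.dist_comm
    have hc2 : G.dist y w = G.dist w y := SimpleGraph.dist_comm
    have hd1 : G.dist w x = m := by omega
    have hd2 : G.dist w y = m := by omega
    have : w ∈ bisector G x y := by
      simp only [bisector, Set.mem_setOf_eq, hd1, hd2]
    rw [hbis] at this
    exact this
  · intro hside
    refine ⟨hxy, Set.eq_empty_iff_forall_notMem.mpr fun w hw => ?_⟩
    have hdiff : ¬ (x ∈ A ↔ y ∈ A) := by
      rcases hside with ⟨hx, hy⟩ | ⟨hx, hy⟩
      · exact fun h => notA y hy (h.mp hx)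
      · exact fun h => notA x hx (h.mpr hy)
    have hwx : (w ∈ A ↔ x ∈ A) ↔ Even (G.dist w x) :=
      dist_parity hG hUnion hDisj hA hB w x
    have hwy : (w ∈ A ↔ y ∈ A) ↔ Even (G.dist w y) :=
      dist_parity hG hUnion hDisj hA hB w y
    have heq : G.dist w x = G.dist w y := hw
    rw [heq] at hwx
    exact hdiff (by tauto)
end

section
/- Let G and H be finite simple graphs with G connected, and let S be a minimum distance-equalizer set of G⊙H such that for every i ∈ {1, …, n(G)} either V(H_i) ∩ S = ∅ or V(H_i) ⊆ S. If n(H) ≥ 2, then |U(S)| ≤ β(Ĝ) + min{ α(Ĝ)/n(H), (β(Ĝ) − β*(G))/(n(H)−1) }, where the inequality is between real numbers. -/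
universe u v

variable {V : Type u} {W : Type v}

section CoronaAux

open SimpleGraph

variable {G : SimpleGraph V} {H : SimpleGraph W}

/-- The inclusion of `G` into the corona as the hub vertices. -/
def hubHom (G : SimpleGraph V) (H : SimpleGraph W) : G →g corona G H where
  toFun := Sum.inl
  map_rel' := fun h => h

open scoped Classical in
/-- A lower bound function for distances in the corona. -/
noncomputable def coronaD (G : SimpleGraph V) : V ⊕ V × W → V ⊕ V × W → ℕ
  | Sum.inl a, Sum.inl b => G.dist a b
  | Sum.inl a, Sum.inr (j, _) => G.dist a j + 1
  | Sum.inr (i, _), Sum.inl b => G.dist i b + 1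
  | Sum.inr (i, u), Sum.inr (j, w) =>
      if i = j then (if u = w then 0 else 1) else G.dist i j + 2

@[simp] lemma coronaD_inl_inl (a b : V) :
    coronaD (W := W) G (Sum.inl a) (Sum.inl b) = G.dist a b := rfl

@[simp] lemma coronaD_inl_inr (a j : V) (w : W) :
    coronaD G (Sum.inl a) (Sum.inr (j, w)) = G.dist a j + 1 := rfl

@[simp] lemma coronaD_inr_inl (i : V) (u : W) (b : V) :
    coronaD G (Sum.inr (i, u)) (Sum.inl b) = G.dist i b + 1 := rfl

open scoped Classical in
lemma coronaD_inr_inr (i : V) (u : W) (j : V) (w : W) :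
    coronaD G (Sum.inr (i, u)) (Sum.inr (j, w)) =
      if i = j then (if u = w then 0 else 1) else G.dist i j + 2 := by
  simp [coronaD]

@[simp] lemma hubHom_apply (a : V) : hubHom G H a = Sum.inl a := rfl

lemma coronaD_lip (hG : G.Connected) {x z : V ⊕ V × W} (y : V ⊕ V × W)
    (hxz : (corona G H).Adj x z) : coronaD G x y ≤ coronaD G z y + 1 := by
  have tri : ∀ a b c : V, G.Adj a b → G.dist a c ≤ G.dist b c + 1 := by
    intro a b c hab
    have h1 : G.dist a b = 1 := SimpleGraph.dist_eq_one_iff_adj.mpr hab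
    have h2 := hG.dist_triangle (u := a) (v := b) (w := c)
    omega
  rcases x with a | ⟨i, u⟩ <;> rcases z with b | ⟨j, w⟩
  · have hab : G.Adj a b := hxz
    rcases y with c | ⟨k, s⟩
    · simpa using tri a b c hab
    · simp only [coronaD_inl_inr]
      have := tri a b k hab
      omega
  · obtain rfl : a = j := hxz
    rcases y with c | ⟨k, s⟩
    · simp only [coronaD_inl_inl, coronaD_inr_inl]; omega
    · simp only [coronaD_inl_inr, coronaD_inr_inr]
      rcases eq_or_ne a k with rfl | hak
      · have h0 : G.dist a a = 0 := SimpleGraph.dist_self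
        simp only [if_pos rfl]
        split_ifs <;> omega
      · simp only [if_neg hak]; omega
  · obtain rfl : b = i := hxz
    rcases y with c | ⟨k, s⟩
    · simp only [coronaD_inl_inl, coronaD_inr_inl]; omega
    · simp only [coronaD_inr_inr, coronaD_inl_inr]
      rcases eq_or_ne b k with rfl | hik
      · simp only [if_pos rfl]
        split_ifs <;> omega
      · simp only [if_neg hik]; omega
  · obtain ⟨h1, -⟩ := hxz
    obtain rfl : i = j := h1
    rcases y with c | ⟨k, s⟩
    · simp only [coronaD_inr_inl]; omega
    · simp only [coronaD_inr_inr]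
      split_ifs <;> omega

lemma coronaD_le_length (hG : G.Connected) {x y : V ⊕ V × W}
    (p : (corona G H).Walk x y) : coronaD G x y ≤ p.length := by
  induction p with
  | nil =>
    rename_i z
    rcases z with a | ⟨i, u⟩
    · simp [SimpleGraph.dist_self]
    · simp [coronaD_inr_inr]
  | cons h p ih =>
    refine le_trans (coronaD_lip hG _ h) ?_
    simpa [SimpleGraph.Walk.length_cons] using Nat.add_le_add_right ih 1

lemma corona_dist_eq_of_walk (hG : G.Connected) {x y : V ⊕ V × W}
    (q : (corona G H).Walk x y) (hq : q.length = coronaD G x y) :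
    (corona G H).dist x y = coronaD G x y := by
  refine le_antisymm (hq ▸ SimpleGraph.dist_le q) ?_
  obtain ⟨r, hr⟩ := q.reachable.exists_walk_length_eq_dist
  exact hr ▸ coronaD_le_length hG r

lemma corona_dist_hub_hub (hG : G.Connected) (H : SimpleGraph W) (a b : V) :
    (corona G H).dist (Sum.inl a) (Sum.inl b) = G.dist a b := by
  obtain ⟨p, hp⟩ := hG.exists_walk_length_eq_dist a b
  have h := corona_dist_eq_of_walk hG (p.map (hubHom G H)) (by rw [SimpleGraph.Walk.length_map]; exact hp)
  simpa using h

lemma corona_dist_hub_leaf (hG : G.Connected) (H : SimpleGraph W) (a j : V) (w : W) :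
    (corona G H).dist (Sum.inl a) (Sum.inr (j, w)) = G.dist a j + 1 := by
  obtain ⟨p, hp⟩ := hG.exists_walk_length_eq_dist a j
  have hadj : (corona G H).Adj (Sum.inl j) (Sum.inr (j, w)) := rfl
  have h := corona_dist_eq_of_walk hG ((p.map (hubHom G H)).concat hadj)
    ((SimpleGraph.Walk.length_concat _ _).trans (congrArg (· + 1) ((SimpleGraph.Walk.length_map (f := hubHom G H) (p := p)).trans hp)))
  simpa using h

lemma corona_dist_leaf_hub (hG : G.Connected) (H : SimpleGraph W) (i : V) (u : W) (b : V) :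
    (corona G H).dist (Sum.inr (i, u)) (Sum.inl b) = G.dist i b + 1 := by
  obtain ⟨p, hp⟩ := hG.exists_walk_length_eq_dist i b
  have hadj : (corona G H).Adj (Sum.inr (i, u)) (Sum.inl i) := rfl
  have h := corona_dist_eq_of_walk hG (SimpleGraph.Walk.cons hadj (p.map (hubHom G H)))
    ((SimpleGraph.Walk.length_cons _ _).trans (congrArg (· + 1) ((SimpleGraph.Walk.length_map (f := hubHom G H) (p := p)).trans hp)))
  simpa using h

lemma corona_dist_leaf_leaf (hG : G.Connected) (H : SimpleGraph W) {i j : V} (u w : W)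
    (hij : i ≠ j) :
    (corona G H).dist (Sum.inr (i, u)) (Sum.inr (j, w)) = G.dist i j + 2 := by
  obtain ⟨p, hp⟩ := hG.exists_walk_length_eq_dist i j
  have hadj1 : (corona G H).Adj (Sum.inr (i, u)) (Sum.inl i) := rfl
  have hadj2 : (corona G H).Adj (Sum.inl j) (Sum.inr (j, w)) := rfl
  have h := corona_dist_eq_of_walk hG
    (SimpleGraph.Walk.cons hadj1 ((p.map (hubHom G H)).concat hadj2))
    (by simp [SimpleGraph.Walk.length_concat, coronaD_inr_inr, if_neg hij]; exact (SimpleGraph.Walk.length_concat _ _).trans (congrArg (· + 1) ((SimpleGraph.Walk.length_map (f := hubHom G H) (p := p)).trans hp)))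
  simpa [coronaD_inr_inr, if_neg hij] using h

end CoronaAux

/-- If `S` is a minimum distance-equalizer set of `G ⊙ H` such that each
copy of `H` is disjoint from or contained in `S`, and `n(H) ≥ 2`, then, as real numbers,
`|U(S)| ≤ β(Ĝ) + min{α(Ĝ)/n(H), (β(Ĝ) − β*(G))/(n(H) − 1)}`. -/
theorem corona_Uset_card_upper_bound [Fintype V] [Fintype W]
    (G : SimpleGraph V) (H : SimpleGraph W) (hG : G.Connected)
    (S : Set (V ⊕ V × W)) (hS : IsDistEqSet (corona G H) S)
    (hmin : S.ncard = eqdim (corona G H))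
    (hstruct : ∀ i : V, {x : V ⊕ V × W | ∃ w : W, x = Sum.inr (i, w)} ∩ S = ∅ ∨
      {x : V ⊕ V × W | ∃ w : W, x = Sum.inr (i, w)} ⊆ S)
    (hW : 2 ≤ Fintype.card W) :
    ({v : V | ∃ w : W, Sum.inr (v, w) ∈ S}.ncard : ℝ) ≤
      (vcNum (emptyBisector G) : ℝ) +
        min ((indepNum (emptyBisector G) : ℝ) / (Fintype.card W : ℝ))
          (((vcNum (emptyBisector G) : ℝ) - (betaStar G : ℝ)) /
            ((Fintype.card W : ℝ) - 1)) := by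
  classical
  obtain ⟨w₀⟩ : Nonempty W := Fintype.card_pos_iff.mp (by omega)
  set U : Set V := {v : V | ∃ w : W, Sum.inr (v, w) ∈ S} with hUdef
  set L : Set V := {v : V | Sum.inl v ∈ S} with hLdef
  have hcopy : ∀ i ∈ U, ∀ w : W, Sum.inr (i, w) ∈ S := by
    intro i hi w
    rcases hstruct i with h | h
    · obtain ⟨w', hw'⟩ := hi
      have : Sum.inr (i, w') ∈ ({x : V ⊕ V × W | ∃ w : W, x = Sum.inr (i, w)} ∩ S) :=
        ⟨⟨w', rfl⟩, hw'⟩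
      rw [h] at this
      exact this.elim
    · exact h ⟨w, rfl⟩
  have dHH : ∀ a b : V, (corona G H).dist (Sum.inl a) (Sum.inl b) = G.dist a b :=
    corona_dist_hub_hub hG H
  have dHL : ∀ (a j : V) (w : W),
      (corona G H).dist (Sum.inl a) (Sum.inr (j, w)) = G.dist a j + 1 :=
    corona_dist_hub_leaf hG H
  have dLH : ∀ (i : V) (u : W) (b : V),
      (corona G H).dist (Sum.inr (i, u)) (Sum.inl b) = G.dist i b + 1 :=
    corona_dist_leaf_hub hG H
  have dLL : ∀ {i j : V} (u w : W), i ≠ j →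
      (corona G H).dist (Sum.inr (i, u)) (Sum.inr (j, w)) = G.dist i j + 2 :=
    fun u w hij => corona_dist_leaf_leaf hG H u w hij
  -- L is a vertex cover of the empty bisector graph
  have hLcover : IsVertexCover (emptyBisector G) L := by
    intro i j hij
    have hij' : i ≠ j ∧ bisector G i j = ∅ := hij
    by_contra hcon
    push_neg at hcon
    obtain ⟨x, hxS, hd⟩ := hS (show Sum.inl i ∉ S from hcon.1) (show Sum.inl j ∉ S from hcon.2)
      (fun h => hij'.1 (Sum.inl.inj h))
    rcases x with k | ⟨k, u⟩
    · rw [dHH, dHH] at hd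
      have hk : k ∈ bisector G i j := hd
      rw [hij'.2] at hk
      exact hk
    · rw [dLH, dLH] at hd
      have hk : k ∈ bisector G i j := Nat.add_right_cancel hd
      rw [hij'.2] at hk
      exact hk
  -- U is a vertex cover of the empty bisector graph
  have hUcover : IsVertexCover (emptyBisector G) U := by
    intro i j hij
    have hij' : i ≠ j ∧ bisector G i j = ∅ := hij
    by_contra hcon
    push_neg at hcon
    have hx : Sum.inr (i, w₀) ∉ S := fun h => hcon.1 ⟨w₀, h⟩
    have hy : Sum.inr (j, w₀) ∉ S := fun h => hcon.2 ⟨w₀, h⟩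
    obtain ⟨x, hxS, hd⟩ := hS hx hy (by simp [Prod.ext_iff, hij'.1])
    rcases x with k | ⟨k, u⟩
    · rw [dHL, dHL] at hd
      have hk : k ∈ bisector G i j := Nat.add_right_cancel hd
      rw [hij'.2] at hk
      exact hk
    · have hkU : k ∈ U := ⟨u, hxS⟩
      have hki : k ≠ i := fun h => hcon.1 (h ▸ hkU)
      have hkj : k ≠ j := fun h => hcon.2 (h ▸ hkU)
      rw [dLL _ _ hki, dLL _ _ hkj] at hd
      have hk : k ∈ bisector G i j := Nat.add_right_cancel hd
      rw [hij'.2] at hk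
      exact hk
  -- every vertex is in L or U
  have hUnion : ∀ i : V, i ∈ L ∨ i ∈ U := by
    intro i
    by_contra hcon
    push_neg at hcon
    have hy : Sum.inr (i, w₀) ∉ S := fun h => hcon.2 ⟨w₀, h⟩
    obtain ⟨x, hxS, hd⟩ := hS (show Sum.inl i ∉ S from hcon.1) hy (by simp)
    rcases x with k | ⟨k, u⟩
    · rw [dHH, dHL] at hd
      omega
    · have hki : k ≠ i := fun h => hcon.2 (h ▸ ⟨u, hxS⟩)
      rw [dLH, dLL _ _ hki] at hd
      omega
  -- (U, L) is a forward-equalized pair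
  have hFwd : IsForwardEqualizedPair G U L := by
    constructor
    · exact Set.eq_univ_of_forall fun i => (Set.mem_union _ _ _).mpr (hUnion i).symm
    · intro a ha b hb
      have hbU : b ∉ U := hb.2
      have hy : Sum.inr (b, w₀) ∉ S := fun h => hbU ⟨w₀, h⟩
      obtain ⟨x, hxS, hd⟩ := hS (show Sum.inl a ∉ S from ha.2) hy (by simp)
      rcases x with k | ⟨k, u⟩
      · rw [dHH, dHL] at hd
        exact ⟨k, hd⟩
      · have hkb : k ≠ b := fun h => hbU (h ▸ ⟨u, hxS⟩)
        rw [dLH, dLL _ _ hkb] at hd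
        by_cases hka : k = a
        · subst hka
          have h0 : G.dist k k = 0 := SimpleGraph.dist_self
          omega
        · exact ⟨k, by omega⟩
  have hbstar : betaStar G ≤ (U ∩ L).ncard :=
    Nat.sInf_le ⟨U, L, hUcover, hLcover, hFwd, rfl⟩
  have hβl : vcNum (emptyBisector G) ≤ L.ncard := Nat.sInf_le ⟨L, hLcover, rfl⟩
  -- a minimum vertex cover C
  have hvcne : {n | ∃ C : Set V, IsVertexCover (emptyBisector G) C ∧ C.ncard = n}.Nonempty :=
    ⟨(Set.univ : Set V).ncard, Set.univ, fun x y _ => Or.inl (Set.mem_univ x), rfl⟩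
  obtain ⟨C, hCcover, hCcard⟩ := Nat.sInf_mem hvcne
  have hCcard' : C.ncard = vcNum (emptyBisector G) := hCcard
  -- independence number bound
  have hAindep : IsIndepSet (emptyBisector G) Cᶜ := by
    intro x y hx hy hadj
    rcases hCcover hadj with h | h
    exacts [hx h, hy h]
  have hbdd : BddAbove {n | ∃ A : Set V, IsIndepSet (emptyBisector G) A ∧ A.ncard = n} := by
    refine ⟨Fintype.card V, ?_⟩
    rintro n ⟨A, -, rfl⟩
    have h := Set.ncard_le_ncard (Set.subset_univ A) (Set.toFinite _)
    simpa [Set.ncard_univ, Nat.card_eq_fintype_card] using h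
  have hαA : Cᶜ.ncard ≤ indepNum (emptyBisector G) := le_csSup hbdd ⟨Cᶜ, hAindep, rfl⟩
  have hcompl : C.ncard + Cᶜ.ncard = Fintype.card V := by
    rw [Set.ncard_add_ncard_compl, Nat.card_eq_fintype_card]
  have F4 : Fintype.card V ≤ indepNum (emptyBisector G) + vcNum (emptyBisector G) := by
    omega
  -- the test distance-equalizer set S₁
  set S₁ : Set (V ⊕ V × W) :=
    Set.range Sum.inl ∪ Sum.inr '' (C ×ˢ (Set.univ : Set W)) with hS₁def
  have hS₁eq : IsDistEqSet (corona G H) S₁ := by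
    intro x y hx hy hxy
    rcases x with a | ⟨i, u⟩
    · exact absurd (Or.inl (Set.mem_range_self a)) hx
    rcases y with b | ⟨j, w⟩
    · exact absurd (Or.inl (Set.mem_range_self b)) hy
    have hiC : i ∉ C := fun h => hx (Or.inr ⟨(i, u), ⟨h, Set.mem_univ u⟩, rfl⟩)
    have hjC : j ∉ C := fun h => hy (Or.inr ⟨(j, w), ⟨h, Set.mem_univ w⟩, rfl⟩)
    by_cases hij : i = j
    · subst hij
      refine ⟨Sum.inl i, Or.inl (Set.mem_range_self i), ?_⟩
      rw [dHL, dHL]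
    · have hnadj : ¬ (emptyBisector G).Adj i j := fun h => (hCcover h).elim hiC hjC
      have hB : (bisector G i j).Nonempty := by
        rw [Set.nonempty_iff_ne_empty]
        intro h
        exact hnadj ⟨hij, h⟩
      obtain ⟨k, hk⟩ := hB
      refine ⟨Sum.inl k, Or.inl (Set.mem_range_self k), ?_⟩
      have hk' : G.dist k i = G.dist k j := hk
      rw [dHL, dHL, hk']
  have heqdim : eqdim (corona G H) ≤ S₁.ncard := Nat.sInf_le ⟨S₁, hS₁eq, rfl⟩
  -- cardinality computations
  have hprodcard : ∀ T : Set V,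
      (Sum.inr '' (T ×ˢ (Set.univ : Set W)) : Set (V ⊕ V × W)).ncard
        = T.ncard * Fintype.card W := by
    intro T
    rw [Set.ncard_image_of_injective _ Sum.inr_injective,
      ← Nat.card_coe_set_eq, Nat.card_congr (Equiv.Set.prod T Set.univ), Nat.card_prod,
      Nat.card_coe_set_eq, Nat.card_coe_set_eq, Set.ncard_univ,
      Nat.card_eq_fintype_card]
  have hS₁card : S₁.ncard = Fintype.card V + vcNum (emptyBisector G) * Fintype.card W := by
    have hdisj : Disjoint (Set.range (Sum.inl : V → V ⊕ V × W))
        (Sum.inr '' (C ×ˢ (Set.univ : Set W))) := by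
      rw [Set.disjoint_left]
      rintro x ⟨a, rfl⟩ ⟨p, -, h⟩
      cases h
    rw [hS₁def, Set.ncard_union_eq hdisj (Set.toFinite _) (Set.toFinite _), hprodcard, hCcard']
    congr 1
    rw [← Set.image_univ, Set.ncard_image_of_injective _ Sum.inl_injective, Set.ncard_univ,
      Nat.card_eq_fintype_card]
  have hSdecomp : S = Sum.inl '' L ∪ Sum.inr '' (U ×ˢ (Set.univ : Set W)) := by
    ext x
    constructor
    · intro hxS
      rcases x with a | ⟨i, u⟩
      · exact Or.inl ⟨a, hxS, rfl⟩
      · exact Or.inr ⟨(i, u), ⟨⟨u, hxS⟩, Set.mem_univ u⟩, rfl⟩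
    · rintro (⟨a, ha, rfl⟩ | ⟨⟨i, u⟩, ⟨hi, -⟩, rfl⟩)
      · exact ha
      · exact hcopy i hi u
  have hScard : S.ncard = L.ncard + U.ncard * Fintype.card W := by
    have hdisj2 : Disjoint (Sum.inl '' L) (Sum.inr '' (U ×ˢ (Set.univ : Set W))) := by
      rw [Set.disjoint_left]
      rintro x ⟨a, -, rfl⟩ ⟨p, -, h⟩
      cases h
    rw [hSdecomp, Set.ncard_union_eq hdisj2 (Set.toFinite _) (Set.toFinite _), hprodcard,
      Set.ncard_image_of_injective _ Sum.inl_injective]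
  have hiu : (U ∩ L).ncard + Fintype.card V = U.ncard + L.ncard := by
    have h1 := Set.ncard_inter_add_ncard_union U L (Set.toFinite _) (Set.toFinite _)
    have h2 : U ∪ L = Set.univ := Set.eq_univ_of_forall fun i => (Set.mem_union _ _ _).mpr (hUnion i).symm
    rw [h2, Set.ncard_univ, Nat.card_eq_fintype_card] at h1
    exact h1
  have F1 : L.ncard + U.ncard * Fintype.card W
      ≤ Fintype.card V + vcNum (emptyBisector G) * Fintype.card W := by
    rw [← hScard, ← hS₁card, hmin]
    exact heqdim
  -- pass to the reals
  have hn2 : (2 : ℝ) ≤ (Fintype.card W : ℝ) := by exact_mod_cast hW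
  have hF1 : (L.ncard : ℝ) + (U.ncard : ℝ) * (Fintype.card W : ℝ)
      ≤ (Fintype.card V : ℝ) + (vcNum (emptyBisector G) : ℝ) * (Fintype.card W : ℝ) := by
    exact_mod_cast F1
  have hF2 : (vcNum (emptyBisector G) : ℝ) ≤ (L.ncard : ℝ) := by exact_mod_cast hβl
  have hF3 : (betaStar G : ℝ) ≤ ((U ∩ L).ncard : ℝ) := by exact_mod_cast hbstar
  have hF4 : (Fintype.card V : ℝ)
      ≤ (indepNum (emptyBisector G) : ℝ) + (vcNum (emptyBisector G) : ℝ) := by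
    exact_mod_cast F4
  have hIU : ((U ∩ L).ncard : ℝ) + (Fintype.card V : ℝ) = (U.ncard : ℝ) + (L.ncard : ℝ) := by
    exact_mod_cast hiu
  rw [← sub_le_iff_le_add']
  apply le_min
  · rw [le_div_iff₀ (by linarith : (0 : ℝ) < (Fintype.card W : ℝ))]
    nlinarith [hF1, hF2, hF4]
  · rw [le_div_iff₀ (by linarith : (0 : ℝ) < (Fintype.card W : ℝ) - 1)]
    nlinarith [hF1, hF3, hIU]
end
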